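/- For fixed w > 0, the set B = ⋃_{j ∈ ℕ} B_j with B_j = {(x,y) ∈ Q_j × Q_j : x ⪯ y + w/j} satisfies barrel condition (B2) in (P,V): for every (a_i, b_j) ∉ B there is μ ∈ P* with μ(a_i) > μ(b_j) + 1 and μ(c) ≤ μ(d) + 1 for all (c,d) ∈ B. The separating functional can be taken to be ∞̄~ when b_j = 0₀, (1/w)~_i when i = j, and (1/w)~_j when i ≠ j with i,j ∉ {0,∞}. -/

import Mathlib

open scoped NNReal ENNReal

/-- The positive reals, used for the values `a` in elements `a_i`. -/
abbrev Rpos := {a : ℝ // 0 < a}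

/-- The cone `P = {a_i : a ∈ (0,∞), i ∈ ℕ} ∪ {0₀, ∞_∞}`. -/
inductive CP : Type where
  | zero : CP
  | inf : CP
  | elt : Rpos → ℕ+ → CP

namespace CP

/-- Addition on `P`. -/
def add : CP → CP → CP
  | zero, x => x
  | x, zero => x
  | inf, _ => inf
  | _, inf => inf
  | elt a i, elt b j =>
      if i = j then elt ⟨a.1 + b.1, add_pos a.2 b.2⟩ i else inf

/-- Scalar multiplication by nonnegative reals on `P`. -/
noncomputable def smul (r : ℝ≥0) (x : CP) : CP :=
  if h : r = 0 then zero
  else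
    match x with
    | zero => zero
    | inf => inf
    | elt a i => elt ⟨(r : ℝ) * a.1,
        mul_pos (by exact_mod_cast pos_iff_ne_zero.mpr h) a.2⟩ i

/-- The preorder on `P`: `a_i ⪯ b_j` iff `i = j` and `a ≤ b`. -/
def le : CP → CP → Prop
  | zero, zero => True
  | inf, inf => True
  | elt a i, elt b j => i = j ∧ a.1 ≤ b.1
  | _, _ => False

/-- The neighborhood relation: `nrel v x y` means `x ⪯ y + v`. -/
def nrel (v : ℝ) : CP → CP → Prop
  | zero, _ => True
  | _, inf => True
  | elt a i, elt b j => i = j ∧ a.1 ≤ b.1 + (i : ℝ) * v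
  | _, _ => False

/-- The subcone `Q_j = {b_j : b ∈ (0,∞)} ∪ {0₀, ∞_∞}`. -/
def Q (j : ℕ+) : Set CP := {x | x = zero ∨ x = inf ∨ ∃ a : Rpos, x = elt a j}

/-- Symmetric neighborhood of `b` relative to the subcone `Qs`. -/
def symN (Qs : Set CP) (v : ℝ) (b : CP) : Set CP :=
  {a ∈ Qs | nrel v a b ∧ nrel v b a}

/-- Linearity of a functional `μ : P → ℝ ∪ {+∞}` relative to a subcone. -/
def IsLinearOn (Qs : Set CP) (μ : CP → EReal) : Prop :=
  μ zero = 0 ∧ (∀ x, μ x ≠ ⊥) ∧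
  (∀ x ∈ Qs, ∀ y ∈ Qs, μ (add x y) = μ x + μ y) ∧
  (∀ r : ℝ≥0, ∀ x ∈ Qs, μ (smul r x) = ((r : ℝ) : EReal) * μ x)

/-- (Uniform) continuity of a functional relative to a subcone. -/
def IsContOn (Qs : Set CP) (μ : CP → EReal) : Prop :=
  ∃ v : ℝ, 0 < v ∧ ∀ x ∈ Qs, ∀ y ∈ Qs, nrel v x y → μ x ≤ μ y + 1

/-- Membership in the dual cone of the subcone `Qs`. -/
def InDualOn (Qs : Set CP) (μ : CP → EReal) : Prop :=
  IsLinearOn Qs μ ∧ IsContOn Qs μ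

/-- `λ B = {(λx, λy) : (x,y) ∈ B}`. -/
def scaleSet (l : ℝ≥0) (B : Set (CP × CP)) : Set (CP × CP) :=
  (fun p => (smul l p.1, smul l p.2)) '' B

/-- `B` is a barrel in the subcone `Qs`. -/
def IsBarrelOn (Qs : Set CP) (B : Set (CP × CP)) : Prop :=
  (∀ p ∈ B, p.1 ∈ Qs ∧ p.2 ∈ Qs) ∧
  (∀ p ∈ B, ∀ q ∈ B, ∀ t : ℝ≥0, t ≤ 1 →
     (add (smul t p.1) (smul (1 - t) q.1),
      add (smul t p.2) (smul (1 - t) q.2)) ∈ B) ∧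
  (∀ b ∈ Qs, ∃ v : ℝ, 0 < v ∧ ∀ a ∈ symN Qs v b,
     ∃ l : ℝ≥0, 0 < l ∧ (a, b) ∈ scaleSet l B) ∧
  (∀ a ∈ Qs, ∀ b ∈ Qs, (a, b) ∉ B → ∃ μ : CP → EReal, InDualOn Qs μ ∧
     μ b + 1 < μ a ∧ ∀ p ∈ B, μ p.1 ≤ μ p.2 + 1)

/-- The subcone `Qs` is barreled. -/
def BarreledOn (Qs : Set CP) : Prop :=
  ∀ B, IsBarrelOn Qs B → ∀ b ∈ Qs, ∃ v : ℝ, 0 < v ∧ ∃ l : ℝ≥0, 0 < l ∧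
    ∀ a ∈ symN Qs v b, (a, b) ∈ scaleSet l B

/-- The subcone `Qs` is upper-barreled. -/
def UpperBarreledOn (Qs : Set CP) : Prop :=
  ∀ B, IsBarrelOn Qs B → ∃ v : ℝ, 0 < v ∧
    ∀ p : CP × CP, p.1 ∈ Qs → p.2 ∈ Qs → nrel v p.1 p.2 → p ∈ B

/-- The functional `∞̄` (resp. its extension `∞̄~`). -/
noncomputable def fnBarInf : CP → EReal
  | zero => 0
  | _ => ⊤

/-- The functional `0̄_k` (resp. its extension). -/
noncomputable def fnBarZero (k : ℕ+) : CP → EReal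
  | zero => 0
  | inf => ⊤
  | elt _ i => if i = k then 0 else ⊤

/-- The functional `c_k : a_k ↦ c·a` (extended by `+∞` off `Q_k`). -/
noncomputable def fnLam (c : ℝ) (k : ℕ+) : CP → EReal
  | zero => 0
  | inf => ⊤
  | elt a i => if i = k then ((c * a.1 : ℝ) : EReal) else ⊤

/-- The zero functional. -/
noncomputable def fnZero : CP → EReal := fun _ => 0

/-- The barrel `B_j = {(x,y) ∈ Q_j² : x ⪯ y + w/j}`. -/
def Bset (w : ℝ) (j : ℕ+) : Set (CP × CP) :=
  {p | p.1 ∈ Q j ∧ p.2 ∈ Q j ∧ nrel (w / (j : ℝ)) p.1 p.2}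

/-- The barrel `B = ⋃_j B_j`. -/
def BigB (w : ℝ) : Set (CP × CP) := ⋃ (j : ℕ+), Bset w j

/-- The map `Λ : Q_j → [0,∞]`, `a_j ↦ a/j`. -/
noncomputable def Lam (j : ℕ+) : CP → ℝ≥0∞
  | zero => 0
  | inf => ⊤
  | elt a _ => ENNReal.ofReal (a.1 / (j : ℝ))


/- ### Auxiliary lemmas -/

lemma one_ne_bot' : (1 : EReal) ≠ ⊥ := by
  rw [show (1 : EReal) = ((1 : ℝ) : EReal) by norm_cast]; exact EReal.coe_ne_bot 1

lemma top_add_one : (⊤ : EReal) + 1 = ⊤ := EReal.top_add_of_ne_bot one_ne_bot'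

lemma eone_lt_top : (1 : EReal) < ⊤ := by
  rw [show (1 : EReal) = ((1 : ℝ) : EReal) by norm_cast]; exact EReal.coe_lt_top 1

lemma etop_add_top : (⊤ : EReal) + ⊤ = ⊤ := EReal.top_add_of_ne_bot (by simp)

lemma real_le {w a b : ℝ} (hw : 0 < w) (h : a ≤ b + w) : w⁻¹ * a ≤ w⁻¹ * b + 1 := by
  have h1 : w⁻¹ * a ≤ w⁻¹ * (b + w) := mul_le_mul_of_nonneg_left h (by positivity)
  have h2 : w⁻¹ * (b + w) = w⁻¹ * b + 1 := by field_simp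
  linarith

lemma real_lt {w a b : ℝ} (hw : 0 < w) (h : b + w < a) : w⁻¹ * b + 1 < w⁻¹ * a := by
  have h1 : w⁻¹ * (b + w) < w⁻¹ * a := by
    apply mul_lt_mul_of_pos_left h (by positivity)
  have h2 : w⁻¹ * (b + w) = w⁻¹ * b + 1 := by field_simp
  linarith

lemma zero_mem_Q (j : ℕ+) : zero ∈ Q j := Or.inl rfl
lemma inf_mem_Q (j : ℕ+) : inf ∈ Q j := Or.inr (Or.inl rfl)
lemma elt_mem_Q (a : Rpos) (j : ℕ+) : elt a j ∈ Q j := Or.inr (Or.inr ⟨a, rfl⟩)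

lemma elt_mem_Q_iff {a : Rpos} {i j : ℕ+} : elt a i ∈ Q j ↔ i = j := by
  constructor
  · rintro (h | h | ⟨b, h⟩)
    · cases h
    · cases h
    · simp only [CP.elt.injEq] at h; exact h.2
  · rintro rfl; exact elt_mem_Q a _

lemma kcast_pos (j : ℕ+) : (0 : ℝ) < (j : ℝ) := by exact_mod_cast j.pos

lemma kdiv (w : ℝ) (j : ℕ+) : (j : ℝ) * (w / (j : ℝ)) = w := by
  field_simp

/- equation lemmas -/
@[simp] lemma fnBarInf_zero : fnBarInf zero = 0 := rfl
@[simp] lemma fnBarInf_inf : fnBarInf inf = ⊤ := rfl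
@[simp] lemma fnBarInf_elt (a : Rpos) (i : ℕ+) : fnBarInf (elt a i) = ⊤ := rfl

@[simp] lemma fnLam_zero (c : ℝ) (k : ℕ+) : fnLam c k zero = 0 := rfl
@[simp] lemma fnLam_inf (c : ℝ) (k : ℕ+) : fnLam c k inf = ⊤ := rfl
@[simp] lemma fnLam_elt (c : ℝ) (k : ℕ+) (a : Rpos) (i : ℕ+) :
    fnLam c k (elt a i) = if i = k then ((c * a.1 : ℝ) : EReal) else ⊤ := rfl

lemma add_zero_left (x : CP) : add zero x = x := by cases x <;> rfl
lemma add_zero_right (x : CP) : add x zero = x := by cases x <;> rfl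
lemma add_inf_left (y : CP) : add inf y = inf := by cases y <;> rfl
lemma add_inf_right (x : CP) : add x inf = inf := by cases x <;> rfl
lemma add_elt_elt (a b : Rpos) (i j : ℕ+) :
    add (elt a i) (elt b j) =
      if i = j then elt ⟨a.1 + b.1, add_pos a.2 b.2⟩ i else inf := rfl

lemma smul_zero_r (x : CP) : smul 0 x = zero := dif_pos rfl
lemma smul_zero' {r : ℝ≥0} (hr : r ≠ 0) : smul r zero = zero := by
  simp [smul, hr]
lemma smul_inf' {r : ℝ≥0} (hr : r ≠ 0) : smul r inf = inf := by
  simp [smul, hr]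
lemma smul_elt' {r : ℝ≥0} (hr : r ≠ 0) (a : Rpos) (i : ℕ+) :
    smul r (elt a i) = elt ⟨(r : ℝ) * a.1,
      mul_pos (by exact_mod_cast pos_iff_ne_zero.mpr hr) a.2⟩ i := by
  simp [smul, hr]

/- membership lemmas for BigB -/
lemma zero_left_mem (w : ℝ) (y : CP) : (zero, y) ∈ BigB w := by
  cases y with
  | zero => exact Set.mem_iUnion.2 ⟨1, zero_mem_Q 1, zero_mem_Q 1, trivial⟩
  | inf => exact Set.mem_iUnion.2 ⟨1, zero_mem_Q 1, inf_mem_Q 1, trivial⟩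
  | elt b j => exact Set.mem_iUnion.2 ⟨j, zero_mem_Q j, elt_mem_Q b j, trivial⟩

lemma inf_right_mem (w : ℝ) (x : CP) : (x, inf) ∈ BigB w := by
  cases x with
  | zero => exact Set.mem_iUnion.2 ⟨1, zero_mem_Q 1, inf_mem_Q 1, trivial⟩
  | inf => exact Set.mem_iUnion.2 ⟨1, inf_mem_Q 1, inf_mem_Q 1, trivial⟩
  | elt a i => exact Set.mem_iUnion.2 ⟨i, elt_mem_Q a i, inf_mem_Q i, trivial⟩

lemma eq_zero_of_mem_zero {w : ℝ} {x : CP} (h : (x, zero) ∈ BigB w) : x = zero := by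
  obtain ⟨m, h1, h2, h3⟩ := Set.mem_iUnion.1 h
  cases x with
  | zero => rfl
  | inf => exact h3.elim
  | elt a i => exact h3.elim

lemma cross_not_mem {w : ℝ} {a b : Rpos} {i j : ℕ+} (hij : i ≠ j) :
    (elt a i, elt b j) ∉ BigB w := by
  intro h
  obtain ⟨m, h1, h2, h3⟩ := Set.mem_iUnion.1 h
  exact hij ((elt_mem_Q_iff.1 h1).trans (elt_mem_Q_iff.1 h2).symm)

lemma pair_mem_iff {w : ℝ} (hw : 0 < w) {a b : Rpos} {i : ℕ+} :
    (elt a i, elt b i) ∈ BigB w ↔ a.1 ≤ b.1 + w := by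
  constructor
  · intro h
    obtain ⟨m, h1, h2, h3⟩ := Set.mem_iUnion.1 h
    obtain rfl : i = m := elt_mem_Q_iff.1 h1
    obtain ⟨-, hle⟩ := h3
    rwa [kdiv w i] at hle
  · intro h
    refine Set.mem_iUnion.2 ⟨i, elt_mem_Q a i, elt_mem_Q b i, rfl, ?_⟩
    rwa [kdiv w i]

/- nonnegativity -/
lemma fnBarInf_nonneg (y : CP) : 0 ≤ fnBarInf y := by
  cases y <;> simp

lemma fnLam_nonneg {w : ℝ} (hw : 0 < w) (k : ℕ+) (y : CP) : 0 ≤ fnLam w⁻¹ k y := by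
  cases y with
  | zero => exact le_refl _
  | inf => exact le_top
  | elt a i =>
    rw [fnLam_elt]
    split
    · exact_mod_cast mul_nonneg (le_of_lt (by positivity : (0:ℝ) < w⁻¹)) a.2.le
    · exact le_top

/- the B-inequality for fnBarInf -/
lemma fnBarInf_B {w : ℝ} : ∀ p ∈ BigB w, fnBarInf p.1 ≤ fnBarInf p.2 + 1 := by
  rintro ⟨x, y⟩ hp
  cases y with
  | zero =>
    obtain rfl := eq_zero_of_mem_zero hp
    simp
  | inf => rw [fnBarInf_inf, top_add_one]; exact le_top
  | elt b j => rw [fnBarInf_elt, top_add_one]; exact le_top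

/- the B-inequality for fnLam -/
lemma fnLam_B {w : ℝ} (hw : 0 < w) (k : ℕ+) :
    ∀ p ∈ BigB w, fnLam w⁻¹ k p.1 ≤ fnLam w⁻¹ k p.2 + 1 := by
  rintro ⟨x, y⟩ hp
  obtain ⟨j, h1, h2, h3⟩ := Set.mem_iUnion.1 hp
  cases y with
  | zero =>
    cases x with
    | zero => simp
    | inf => exact h3.elim
    | elt a i => exact h3.elim
  | inf =>
    show fnLam w⁻¹ k x ≤ ⊤ + 1
    rw [top_add_one]; exact le_top
  | elt b m =>
    by_cases hm : m = k
    · subst hm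
      obtain rfl : m = j := elt_mem_Q_iff.1 h2
      cases x with
      | zero =>
        show (0 : EReal) ≤ fnLam w⁻¹ m (elt b m) + 1
        exact add_nonneg (fnLam_nonneg hw m _) zero_le_one
      | inf => exact h3.elim
      | elt a i =>
        obtain ⟨rfl, hle⟩ := h3
        rw [kdiv w i] at hle
        simp only [fnLam_elt, ite_true, eq_self_iff_true, if_true]
        exact_mod_cast real_le hw hle
    · show fnLam w⁻¹ k x ≤ fnLam w⁻¹ k (elt b m) + 1
      rw [fnLam_elt, if_neg hm, top_add_one]
      exact le_top

/- dual membership of fnBarInf -/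
lemma fnBarInf_top {x : CP} (hx : x ≠ zero) : fnBarInf x = ⊤ := by
  cases x with
  | zero => exact absurd rfl hx
  | inf => rfl
  | elt a i => rfl

lemma inDual_fnBarInf : InDualOn Set.univ fnBarInf := by
  refine ⟨⟨rfl, ?_, ?_, ?_⟩, 1, one_pos, ?_⟩
  · intro x; cases x <;> simp
  · intro x _ y _
    cases x with
    | zero => rw [add_zero_left, fnBarInf_zero, zero_add]
    | inf =>
      rw [add_inf_left, fnBarInf_inf]
      cases y with
      | zero => rw [fnBarInf_zero, add_zero]
      | inf => rw [fnBarInf_inf, etop_add_top]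
      | elt b j => rw [fnBarInf_elt, etop_add_top]
    | elt a i =>
      cases y with
      | zero => rw [add_zero_right, fnBarInf_zero, add_zero]
      | inf => rw [add_inf_right, fnBarInf_inf, fnBarInf_elt, etop_add_top]
      | elt b j =>
        rw [add_elt_elt, fnBarInf_elt, fnBarInf_elt, etop_add_top]
        split <;> rfl
  · intro r x _
    by_cases hr : r = 0
    · subst hr
      rw [smul_zero_r, fnBarInf_zero]
      rw [show (((0:ℝ≥0) : ℝ) : EReal) = 0 by norm_cast, zero_mul]
    · have hpos : (0 : EReal) < ((r : ℝ) : EReal) := by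
        exact_mod_cast (by exact_mod_cast pos_iff_ne_zero.mpr hr : (0:ℝ) < (r:ℝ))
      cases x with
      | zero => rw [smul_zero' hr, fnBarInf_zero, mul_zero]
      | inf => rw [smul_inf' hr, fnBarInf_inf, EReal.mul_top_of_pos hpos]
      | elt a i =>
        rw [smul_elt' hr, fnBarInf_elt, fnBarInf_elt, EReal.mul_top_of_pos hpos]
  · intro x _ y _ h
    cases x with
    | zero =>
      exact add_nonneg (fnBarInf_nonneg y) zero_le_one
    | inf =>
      cases y with
      | zero => exact h.elim
      | inf => rw [fnBarInf_inf, top_add_one]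
      | elt b j => exact h.elim
    | elt a i =>
      cases y with
      | zero => exact h.elim
      | inf => rw [fnBarInf_inf, fnBarInf_elt, top_add_one]
      | elt b j => rw [fnBarInf_elt, fnBarInf_elt, top_add_one]

/- dual membership of fnLam -/
lemma fnLam_ne_bot {w : ℝ} (k : ℕ+) (x : CP) : fnLam w⁻¹ k x ≠ ⊥ := by
  cases x with
  | zero => simp
  | inf => simp
  | elt a i =>
    rw [fnLam_elt]
    split
    · exact EReal.coe_ne_bot _
    · simp

lemma inDual_fnLam {w : ℝ} (hw : 0 < w) (k : ℕ+) :
    InDualOn Set.univ (fnLam w⁻¹ k) := by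
  refine ⟨⟨rfl, fnLam_ne_bot k, ?_, ?_⟩, w / (k : ℝ), div_pos hw (kcast_pos k), ?_⟩
  · intro x _ y _
    cases x with
    | zero => rw [add_zero_left, fnLam_zero, zero_add]
    | inf =>
      rw [add_inf_left, fnLam_inf, EReal.top_add_of_ne_bot (fnLam_ne_bot k y)]
    | elt a i =>
      cases y with
      | zero => rw [add_zero_right, fnLam_zero, add_zero]
      | inf =>
        rw [add_inf_right, fnLam_inf]
        rw [show fnLam w⁻¹ k (elt a i) + ⊤ = ⊤ + fnLam w⁻¹ k (elt a i) from add_comm _ _,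
          EReal.top_add_of_ne_bot (fnLam_ne_bot k _)]
      | elt b j =>
        rw [add_elt_elt]
        by_cases hij : i = j
        · subst hij
          rw [if_pos rfl, fnLam_elt, fnLam_elt, fnLam_elt]
          by_cases hik : i = k
          · rw [if_pos hik, if_pos hik, if_pos hik, ← EReal.coe_add]
            congr 1
            ring
          · rw [if_neg hik, if_neg hik, if_neg hik, etop_add_top]
        · rw [if_neg hij, fnLam_inf, fnLam_elt, fnLam_elt]
          by_cases hik : i = k
          · have hjk : ¬ j = k := fun hjk => hij (hik.trans hjk.symm)
            rw [if_pos hik, if_neg hjk,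
              show ((w⁻¹ * a.1 : ℝ) : EReal) + ⊤ = ⊤ + ((w⁻¹ * a.1 : ℝ) : EReal) from
                add_comm _ _,
              EReal.top_add_of_ne_bot (EReal.coe_ne_bot _)]
          · rw [if_neg hik, EReal.top_add_of_ne_bot]
            split
            · exact EReal.coe_ne_bot _
            · simp
  · intro r x _
    by_cases hr : r = 0
    · subst hr
      rw [smul_zero_r, fnLam_zero]
      rw [show (((0:ℝ≥0) : ℝ) : EReal) = 0 by norm_cast, zero_mul]
    · have hpos : (0 : EReal) < ((r : ℝ) : EReal) := by
        exact_mod_cast (by exact_mod_cast pos_iff_ne_zero.mpr hr : (0:ℝ) < (r:ℝ))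
      cases x with
      | zero => rw [smul_zero' hr, fnLam_zero, mul_zero]
      | inf => rw [smul_inf' hr, fnLam_inf, EReal.mul_top_of_pos hpos]
      | elt a i =>
        rw [smul_elt' hr, fnLam_elt, fnLam_elt]
        by_cases hik : i = k
        · rw [if_pos hik, if_pos hik, ← EReal.coe_mul]
          congr 1
          ring
        · rw [if_neg hik, if_neg hik, EReal.mul_top_of_pos hpos]
  · intro x _ y _ h
    cases x with
    | zero => exact add_nonneg (fnLam_nonneg hw k y) zero_le_one
    | inf =>
      cases y with
      | zero => exact h.elim
      | inf => rw [fnLam_inf, top_add_one]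
      | elt b j => exact h.elim
    | elt a i =>
      cases y with
      | zero => exact h.elim
      | inf => rw [fnLam_inf, top_add_one]; exact le_top
      | elt b j =>
        obtain ⟨rfl, hle⟩ := h
        by_cases hik : i = k
        · subst hik
          rw [kdiv w i] at hle
          simp only [fnLam_elt, ite_true, eq_self_iff_true, if_true]
          exact_mod_cast real_le hw hle
        · rw [fnLam_elt, fnLam_elt, if_neg hik, if_neg hik, top_add_one]

lemma fnLam_lt_top {w : ℝ} (hw : 0 < w) (b : Rpos) (j : ℕ+) :
    fnLam w⁻¹ j (elt b j) + 1 < ⊤ := by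
  rw [fnLam_elt, if_pos rfl,
    show ((w⁻¹ * b.1 : ℝ) : EReal) + 1 = ((w⁻¹ * b.1 + 1 : ℝ) : EReal) by norm_cast]
  exact EReal.coe_lt_top _

/-- `B = ⋃_j B_j` satisfies barrel condition (B2) in `(P, V)`;
the separating functional can be taken to be `∞̄~` when `b_j = 0₀`,
`(1/w)~_i` when `i = j`, and `(1/w)~_j` when `i ≠ j` with `i, j ∉ {0, ∞}`. -/
theorem stmt15 (w : ℝ) (hw : 0 < w) :
    (∀ x y : CP, (x, y) ∉ BigB w → ∃ μ : CP → EReal, InDualOn Set.univ μ ∧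
      μ y + 1 < μ x ∧ ∀ p ∈ BigB w, μ p.1 ≤ μ p.2 + 1) ∧
    (∀ x : CP, (x, zero) ∉ BigB w →
      fnBarInf zero + 1 < fnBarInf x ∧
      ∀ p ∈ BigB w, fnBarInf p.1 ≤ fnBarInf p.2 + 1) ∧
    (∀ (a b : Rpos) (i : ℕ+), (elt a i, elt b i) ∉ BigB w →
      fnLam w⁻¹ i (elt b i) + 1 < fnLam w⁻¹ i (elt a i) ∧
      ∀ p ∈ BigB w, fnLam w⁻¹ i p.1 ≤ fnLam w⁻¹ i p.2 + 1) ∧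
    (∀ (a b : Rpos) (i j : ℕ+), i ≠ j → (elt a i, elt b j) ∉ BigB w →
      fnLam w⁻¹ j (elt b j) + 1 < fnLam w⁻¹ j (elt a i) ∧
      ∀ p ∈ BigB w, fnLam w⁻¹ j p.1 ≤ fnLam w⁻¹ j p.2 + 1) := by
  constructor
  · intro x y hxy
    cases y with
    | zero =>
      refine ⟨fnBarInf, inDual_fnBarInf, ?_, fnBarInf_B⟩
      cases x with
      | zero => exact absurd (zero_left_mem w zero) hxy
      | inf =>
        rw [fnBarInf_zero, fnBarInf_inf, zero_add]
        exact eone_lt_top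
      | elt a i =>
        rw [fnBarInf_zero, fnBarInf_elt, zero_add]
        exact eone_lt_top
    | inf => exact absurd (inf_right_mem w x) hxy
    | elt b j =>
      cases x with
      | zero => exact absurd (zero_left_mem w (elt b j)) hxy
      | inf =>
        refine ⟨fnLam w⁻¹ j, inDual_fnLam hw j, ?_, fnLam_B hw j⟩
        rw [show fnLam w⁻¹ j inf = ⊤ from rfl]
        exact fnLam_lt_top hw b j
      | elt a i =>
        by_cases hij : i = j
        · subst hij
          refine ⟨fnLam w⁻¹ i, inDual_fnLam hw i, ?_, fnLam_B hw i⟩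
          have hab : b.1 + w < a.1 := by
            by_contra hcon
            exact hxy ((pair_mem_iff hw).2 (by linarith))
          simp only [fnLam_elt, ite_true, eq_self_iff_true, if_true]
          rw [show ((w⁻¹ * b.1 : ℝ) : EReal) + 1 = ((w⁻¹ * b.1 + 1 : ℝ) : EReal) by
            norm_cast]
          exact_mod_cast real_lt hw hab
        · refine ⟨fnLam w⁻¹ j, inDual_fnLam hw j, ?_, fnLam_B hw j⟩
          rw [show fnLam w⁻¹ j (elt a i) = ⊤ by rw [fnLam_elt, if_neg hij]]
          exact fnLam_lt_top hw b j
  refine ⟨?_, ?_, ?_⟩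
  · intro x hx
    refine ⟨?_, fnBarInf_B⟩
    cases x with
    | zero => exact absurd (zero_left_mem w zero) hx
    | inf =>
      rw [fnBarInf_zero, fnBarInf_inf, zero_add]
      exact eone_lt_top
    | elt a i =>
      rw [fnBarInf_zero, fnBarInf_elt, zero_add]
      exact eone_lt_top
  · intro a b i h
    refine ⟨?_, fnLam_B hw i⟩
    have hab : b.1 + w < a.1 := by
      by_contra hcon
      exact h ((pair_mem_iff hw).2 (by linarith))
    simp only [fnLam_elt, ite_true, eq_self_iff_true, if_true]
    rw [show ((w⁻¹ * b.1 : ℝ) : EReal) + 1 = ((w⁻¹ * b.1 + 1 : ℝ) : EReal) by norm_cast]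
    exact_mod_cast real_lt hw hab
  · intro a b i j hij h
    refine ⟨?_, fnLam_B hw j⟩
    rw [show fnLam w⁻¹ j (elt a i) = ⊤ by rw [fnLam_elt, if_neg hij]]
    exact fnLam_lt_top hw b j

end CP
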